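/- Let Ω be an open subset of ℝⁿ and let f : ℝⁿ → ℝ be continuous on Ω and differentiable at H^k-almost every point of Ω, where k is a nonnegative integer with k < n and H^k denotes k-dimensional Hausdorff measure. Then the essential supremum of ‖∇f‖ over Ω with respect to H^k equals the essential supremum of ‖∇f‖ over Ω with respect to H^n (i.e. Lebesgue measure on ℝⁿ). -/

import Mathlib

open MeasureTheory ENNReal NNReal Filter Set

/-- Any additive Haar measure vanishes on sets that are null for the full-dimensional
Hausdorff measure. -/
lemma haar_null_of_hausdorff_null {E : Type*} [NormedAddCommGroup E] [NormedSpace ℝ E]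
    [MeasurableSpace E] [BorelSpace E] [FiniteDimensional ℝ E]
    (μ : Measure E) [μ.IsAddHaarMeasure] {s : Set E}
    (h : μH[(Module.finrank ℝ E : ℝ)] s = 0) : μ s = 0 := by
  rw [Measure.isAddLeftInvariant_eq_smul μ (μH[(Module.finrank ℝ E : ℝ)] : Measure E)]
  simp [h]

/-- 1-D estimate: an everywhere differentiable function with a.e. bounded derivative
satisfies the corresponding Lipschitz bound on the interval. -/
lemma abs_sub_le_of_hasDerivAt_ae {g φ : ℝ → ℝ} {t C : ℝ} (ht : 0 ≤ t) (hC : 0 ≤ C)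
    (hg : ∀ s ∈ Set.Icc (0:ℝ) t, HasDerivAt g (φ s) s)
    (hφm : Measurable φ)
    (hφ : ∀ᵐ s ∂(volume.restrict (Set.Icc (0:ℝ) t)), |φ s| ≤ C) :
    |g t - g 0| ≤ C * t := by
  have huIcc : Set.uIcc (0:ℝ) t = Set.Icc (0:ℝ) t := Set.uIcc_of_le ht
  have hae : ∀ᵐ s ∂(volume.restrict (Set.uIoc (0:ℝ) t)), ‖φ s‖ ≤ C := by
    have hφ' : ∀ᵐ s ∂(volume.restrict (Set.Icc (0:ℝ) t)), ‖φ s‖ ≤ C := by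
      filter_upwards [hφ] with s hs; simpa [Real.norm_eq_abs] using hs
    refine ae_restrict_of_ae_restrict_of_subset ?_ hφ'
    rw [Set.uIoc_of_le ht]
    exact Set.Ioc_subset_Icc_self
  have hint : IntervalIntegrable φ volume 0 t := by
    refine (intervalIntegrable_const (c := C)).mono_fun hφm.aestronglyMeasurable.restrict ?_
    filter_upwards [hae] with s hs
    simpa [Real.norm_eq_abs, abs_of_nonneg hC] using hs
  have heq := intervalIntegral.integral_eq_sub_of_hasDerivAt (by rw [huIcc]; exact hg) hint
  have hb := intervalIntegral.norm_integral_le_abs_of_norm_le (g := fun _ => C) hae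
      (intervalIntegrable_const)
  rw [heq] at hb
  simpa [Real.norm_eq_abs, abs_of_nonneg (mul_nonneg ht hC), abs_of_nonneg ht, abs_of_nonneg hC, mul_comm] using hb
/-- If `N` is `μH^k`-null with `k < n`, then almost every line parallel to `v ≠ 0`
misses `N` entirely. -/
lemma tube_null {n k : ℕ} (hk : k < n) {v : EuclideanSpace ℝ (Fin n)} (hv : v ≠ 0)
    {N : Set (EuclideanSpace ℝ (Fin n))} (hN : μH[(k : ℝ)] N = 0) :
    ∀ᵐ y ∂(volume : Measure (EuclideanSpace ℝ (Fin n))), ∀ t : ℝ, y + t • v ∉ N := by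
  set K : Submodule ℝ (EuclideanSpace ℝ (Fin n)) := (ℝ ∙ v)ᗮ with hK
  set m : ℕ := Module.finrank ℝ K with hm
  have hdim : Module.finrank ℝ (ℝ ∙ v) + m = n := by
    rw [hm, hK, Submodule.finrank_add_finrank_orthogonal, finrank_euclideanSpace_fin]
  have hspan1 : Module.finrank ℝ (ℝ ∙ v) = 1 := finrank_span_singleton hv
  have hkm : k ≤ m := by omega
  -- N is null for the m-dimensional Hausdorff measure
  have hNm : μH[(m : ℝ)] N = 0 := by
    refine le_antisymm ?_ (zero_le)
    calc μH[(m : ℝ)] N ≤ μH[(k : ℝ)] N :=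
          Measure.hausdorffMeasure_mono (by exact_mod_cast hkm) N
      _ = 0 := hN
  -- the projection map
  set π : EuclideanSpace ℝ (Fin n) →L[ℝ] K := K.orthogonalProjectionOnto with hπ
  set B := (stdOrthonormalBasis ℝ K).repr with hB
  set P : EuclideanSpace ℝ (Fin n) →ₗ[ℝ] EuclideanSpace ℝ (Fin m) :=
    (B.toLinearEquiv.toLinearMap).comp π.toLinearMap with hP
  have hPapp : ∀ z, P z = B (π z) := fun z => rfl
  have hPsurj : Function.Surjective P := by
    intro z
    refine ⟨(B.symm z : K), ?_⟩
    rw [hPapp]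
    rw [show π ((B.symm z : K) : EuclideanSpace ℝ (Fin n)) = B.symm z from
      Submodule.orthogonalProjectionOnto_mem_subspace_eq_self _]
    simp
  have hPlip : LipschitzWith 1 P := by
    have h1 : LipschitzWith 1 π := by
      refine LipschitzWith.of_dist_le_mul fun x y => ?_
      rw [dist_eq_norm, dist_eq_norm, ← map_sub, NNReal.coe_one, one_mul]
      simpa [hπ] using (K.orthogonalProjectionOnto).le_of_opNorm_le (Submodule.orthogonalProjectionOnto_norm_le K) (x - y)
    have h2 : LipschitzWith 1 (B : K → EuclideanSpace ℝ (Fin m)) := B.lipschitz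
    have h3 : LipschitzWith (1 * 1) P := h2.comp h1
    rwa [mul_one] at h3
  have hPv : P v = 0 := by
    rw [hPapp, show π v = 0 from
      Submodule.orthogonalProjectionOnto_apply_of_mem_orthogonal
        (by rw [hK, Submodule.orthogonal_orthogonal]; exact Submodule.mem_span_singleton_self v),
      map_zero]
  -- the image of N under P is volume-null
  have himg : μH[(m : ℝ)] (P '' N) = 0 := by
    refine le_antisymm ?_ (zero_le)
    calc μH[(m : ℝ)] (P '' N) ≤ (1 : ℝ≥0) ^ (m : ℝ) * μH[(m : ℝ)] N :=
          hPlip.hausdorffMeasure_image_le (by positivity) N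
      _ = 0 := by rw [hNm, mul_zero]
  have hvol : volume (P '' N) = 0 := by
    refine haar_null_of_hausdorff_null volume ?_
    rwa [finrank_euclideanSpace_fin]
  set T := toMeasurable volume (P '' N) with hT
  have hTnull : volume T = 0 := by rwa [hT, measure_toMeasurable]
  have hae : ∀ᵐ y ∂(volume : Measure (EuclideanSpace ℝ (Fin n))), P y ∈ Tᶜ := by
    rw [ae_comp_linearMap_mem_iff P volume volume hPsurj
      (measurableSet_toMeasurable _ _).compl]
    rw [ae_iff]
    have : {a : EuclideanSpace ℝ (Fin m) | ¬ a ∈ Tᶜ} = T := by ext a; simp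
    rw [this]
    exact hTnull
  filter_upwards [hae] with y hy t hmem
  apply hy
  have : P (y + t • v) ∈ T := subset_toMeasurable _ _ ⟨_, hmem, rfl⟩
  rw [map_add, LinearMap.map_smul, hPv, smul_zero, add_zero] at this
  exact this
/-- **Main theorem.** If `f : ℝⁿ → ℝ` is continuous on an open set `Ω` and differentiable at
`H^k`-a.e. point of `Ω` for a nonnegative integer `k < n`, then the essential supremum of
`‖∇f‖` over `Ω` with respect to the `k`-dimensional Hausdorff measure equals the essential
supremum with respect to Lebesgue measure (= `H^n`). -/
theorem stmt_0 {n k : ℕ} (hk : k < n)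
    (Ω : Set (EuclideanSpace ℝ (Fin n))) (hΩ : IsOpen Ω)
    (f : EuclideanSpace ℝ (Fin n) → ℝ) (hf : ContinuousOn f Ω)
    (hdiff : ∀ᵐ x ∂((μH[(k : ℝ)] : Measure (EuclideanSpace ℝ (Fin n))).restrict Ω),
      DifferentiableAt ℝ f x) :
    essSup (fun x => (‖fderiv ℝ f x‖₊ : ℝ≥0∞))
        ((μH[(k : ℝ)] : Measure (EuclideanSpace ℝ (Fin n))).restrict Ω) =
      essSup (fun x => (‖fderiv ℝ f x‖₊ : ℝ≥0∞)) (volume.restrict Ω) := by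
  have hΩm : MeasurableSet Ω := hΩ.measurableSet
  set G : EuclideanSpace ℝ (Fin n) → ℝ≥0∞ := fun x => (‖fderiv ℝ f x‖₊ : ℝ≥0∞) with hG
  have hGm : Measurable G := (measurable_fderiv ℝ f).enorm
  set M : ℝ≥0∞ := essSup G (volume.restrict Ω) with hM
  set c : ℝ≥0∞ := essSup G ((μH[(k : ℝ)] :
    Measure (EuclideanSpace ℝ (Fin n))).restrict Ω) with hc
  -- null sets for H^k are Lebesgue-null
  have hnull : ∀ s : Set (EuclideanSpace ℝ (Fin n)), μH[(k : ℝ)] s = 0 → volume s = 0 := by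
    intro s hs
    refine haar_null_of_hausdorff_null volume ?_
    rw [finrank_euclideanSpace_fin]
    refine le_antisymm ?_ (zero_le)
    calc μH[(n : ℝ)] s ≤ μH[(k : ℝ)] s :=
          Measure.hausdorffMeasure_mono (by exact_mod_cast hk.le) s
      _ = 0 := hs
  -- easy direction: `M ≤ c`
  have le1 : M ≤ c := by
    refine essSup_le_of_ae_le _ ?_
    have h1 := ae_le_essSup (μ := (μH[(k : ℝ)] :
      Measure (EuclideanSpace ℝ (Fin n))).restrict Ω) G
    rw [ae_iff] at h1
    rw [Measure.restrict_apply' hΩm] at h1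
    have h2 := hnull _ h1
    rw [EventuallyLE, ae_iff]
    rw [Measure.restrict_apply' hΩm]
    exact h2
  refine le_antisymm ?_ le1
  rcases eq_top_or_lt_top M with hMtop | hMlt
  · rw [hMtop]; exact le_top
  set C : ℝ := M.toReal with hCdef
  have hC0 : 0 ≤ C := ENNReal.toReal_nonneg
  -- the two bad sets
  set Ebad : Set (EuclideanSpace ℝ (Fin n)) := {x | ¬ G x ≤ M} ∩ Ω with hEdef
  have hEbadm : MeasurableSet Ebad :=
    ((measurableSet_le hGm measurable_const).compl).inter hΩm
  have hEbad0 : volume Ebad = 0 := by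
    have h1 := ae_le_essSup (μ := volume.restrict Ω) G
    rw [ae_iff] at h1
    rwa [Measure.restrict_apply' hΩm] at h1
  set Nbad : Set (EuclideanSpace ℝ (Fin n)) := {x | ¬ DifferentiableAt ℝ f x} ∩ Ω with hNdef
  have hNbad0 : μH[(k : ℝ)] Nbad = 0 := by
    rw [ae_iff] at hdiff
    rwa [Measure.restrict_apply' hΩm] at hdiff
  -- pointwise bound on all of Ω
  have key : ∀ x ∈ Ω, G x ≤ M := by
    intro x hx
    by_cases hdx : DifferentiableAt ℝ f x
    swap
    · simp [hG, fderiv_zero_of_not_differentiableAt hdx]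
    obtain ⟨ε, hε, hball⟩ := Metric.isOpen_iff.1 hΩ x hx
    -- segment estimate in an arbitrary direction
    have claim : ∀ u : EuclideanSpace ℝ (Fin n), u ≠ 0 → ∀ t : ℝ, 0 < t → t * ‖u‖ < ε / 2 →
        |f (x + t • u) - f x| ≤ C * (t * ‖u‖) := by
      intro u hu t ht htε
      have hslice : ∀ᵐ y ∂(volume : Measure (EuclideanSpace ℝ (Fin n))),
          ∀ᵐ s ∂(volume : Measure ℝ), y + s • u ∈ Ebadᶜ := by
        have h0 : ∀ᵐ y ∂(volume : Measure (EuclideanSpace ℝ (Fin n))),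
            ∀ᵐ s ∂(volume : Measure ℝ),
              y + (LinearMap.toSpanSingleton ℝ (EuclideanSpace ℝ (Fin n)) u) s ∈ Ebadᶜ := by
          rw [MeasureTheory.ae_ae_add_linearMap_mem_iff
            (LinearMap.toSpanSingleton ℝ (EuclideanSpace ℝ (Fin n)) u)
            volume volume hEbadm.compl]
          rw [ae_iff]
          have he : {a : EuclideanSpace ℝ (Fin n) | ¬ a ∈ Ebadᶜ} = Ebad := by ext a; simp
          rw [he]; exact hEbad0
        filter_upwards [h0] with y hy
        filter_upwards [hy] with s hs
        simpa [LinearMap.toSpanSingleton_apply] using hs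
      have htube := tube_null hk hu hNbad0
      have hexists : ∀ r : ℝ, 0 < r → ∃ y : EuclideanSpace ℝ (Fin n),
          ((∀ s : ℝ, y + s • u ∉ Nbad) ∧ (∀ᵐ s ∂(volume : Measure ℝ), y + s • u ∈ Ebadᶜ))
          ∧ dist y x < r := by
        intro r hr
        by_contra h
        push_neg at h
        have hsub : Metric.ball x r ⊆ {y : EuclideanSpace ℝ (Fin n) |
            ¬ ((∀ s : ℝ, y + s • u ∉ Nbad) ∧
              (∀ᵐ s ∂(volume : Measure ℝ), y + s • u ∈ Ebadᶜ))} := by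
          intro y hy hgood
          exact absurd (Metric.mem_ball.1 hy) (not_lt.2 (h y hgood))
        have hnull2 : volume {y : EuclideanSpace ℝ (Fin n) |
            ¬ ((∀ s : ℝ, y + s • u ∉ Nbad) ∧
              (∀ᵐ s ∂(volume : Measure ℝ), y + s • u ∈ Ebadᶜ))} = 0 := by
          have h3 := htube.and hslice
          rw [ae_iff] at h3
          exact h3
        exact absurd (measure_mono_null hsub hnull2) (Metric.measure_ball_pos volume x hr).ne'
      have hsq : ∀ j : ℕ, ∃ y : EuclideanSpace ℝ (Fin n),
          ((∀ s : ℝ, y + s • u ∉ Nbad) ∧ (∀ᵐ s ∂(volume : Measure ℝ), y + s • u ∈ Ebadᶜ))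
          ∧ dist y x < min (ε / 2) (1 / ((j : ℝ) + 1)) :=
        fun j => hexists _ (lt_min (by linarith) (by positivity))
      choose yseq hgood hdist using hsq
      have htendd : Filter.Tendsto yseq Filter.atTop (nhds x) := by
        rw [tendsto_iff_dist_tendsto_zero]
        refine squeeze_zero (fun j => dist_nonneg)
          (fun j => (lt_of_lt_of_le (hdist j) (min_le_right _ _)).le) ?_
        exact tendsto_one_div_add_atTop_nhds_zero_nat
      have hmem : ∀ j : ℕ, ∀ s : ℝ, s ∈ Set.Icc (0:ℝ) t →
          yseq j + s • u ∈ Metric.ball x ε := by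
        intro j s hs
        have h1 : dist (yseq j + s • u) (yseq j) = ‖s • u‖ := by
          simp [dist_eq_norm]
        have h2 : dist (yseq j + s • u) x ≤ ‖s • u‖ + dist (yseq j) x := by
          calc dist (yseq j + s • u) x ≤ dist (yseq j + s • u) (yseq j) + dist (yseq j) x :=
                dist_triangle _ _ _
            _ = ‖s • u‖ + dist (yseq j) x := by rw [h1]
        have h3 : ‖s • u‖ ≤ t * ‖u‖ := by
          rw [norm_smul, Real.norm_eq_abs, abs_of_nonneg hs.1]
          exact mul_le_mul_of_nonneg_right hs.2 (norm_nonneg u)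
        have h4 : dist (yseq j) x < ε / 2 := lt_of_lt_of_le (hdist j) (min_le_left _ _)
        rw [Metric.mem_ball]
        calc dist (yseq j + s • u) x ≤ ‖s • u‖ + dist (yseq j) x := h2
          _ < t * ‖u‖ + ε / 2 := by
              have := lt_of_le_of_lt (add_le_add_right h3 _) (add_lt_add_left h4 _)
              linarith
          _ < ε := by linarith
      have hest : ∀ j : ℕ, |f (yseq j + t • u) - f (yseq j)| ≤ C * (t * ‖u‖) := by
        intro j
        have h1d := abs_sub_le_of_hasDerivAt_ae
          (g := fun s : ℝ => f (yseq j + s • u))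
          (φ := fun s : ℝ => (fderiv ℝ f (yseq j + s • u)) u)
          ht.le (mul_nonneg hC0 (norm_nonneg u)) ?_ ?_ ?_
        · have h1d' : |f (yseq j + t • u) - f (yseq j)| ≤ C * ‖u‖ * t := by
            simpa using h1d
          calc |f (yseq j + t • u) - f (yseq j)| ≤ C * ‖u‖ * t := h1d'
            _ = C * (t * ‖u‖) := by ring
        · intro s hs
          have hz : yseq j + s • u ∈ Ω := hball (hmem j s hs)
          have hzd : DifferentiableAt ℝ f (yseq j + s • u) := by
            by_contra hnd
            exact (hgood j).1 s ⟨hnd, hz⟩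
          have haff : HasDerivAt (fun s : ℝ => yseq j + s • u) u s := by
            simpa using ((hasDerivAt_id s).smul_const u).const_add (yseq j)
          exact hzd.hasFDerivAt.comp_hasDerivAt s haff
        · exact (measurable_fderiv_apply_const ℝ f u).comp
            ((continuous_const.add (continuous_id.smul continuous_const)).measurable)
        · have h2 := (hgood j).2
          have h3 : ∀ᵐ s ∂(volume.restrict (Set.Icc (0:ℝ) t)), yseq j + s • u ∈ Ebadᶜ :=
            ae_restrict_of_ae h2
          filter_upwards [h3, ae_restrict_mem measurableSet_Icc] with s hsE hsI
          have hz : yseq j + s • u ∈ Ω := hball (hmem j s hsI)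
          have hbound : G (yseq j + s • u) ≤ M := by
            by_contra hB2
            exact hsE ⟨hB2, hz⟩
          have hnorm : ‖fderiv ℝ f (yseq j + s • u)‖ ≤ C := by
            have h5 := ENNReal.toReal_mono hMlt.ne hbound
            simpa [hG] using h5
          calc |(fderiv ℝ f (yseq j + s • u)) u|
              ≤ ‖fderiv ℝ f (yseq j + s • u)‖ * ‖u‖ := by
                simpa [Real.norm_eq_abs] using (fderiv ℝ f (yseq j + s • u)).le_opNorm u
            _ ≤ C * ‖u‖ := mul_le_mul_of_nonneg_right hnorm (norm_nonneg u)
      have hc1 : ContinuousAt f x := hf.continuousAt (hΩ.mem_nhds hx)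
      have hxtu : x + t • u ∈ Ω := by
        apply hball
        rw [Metric.mem_ball, dist_eq_norm]
        have : ‖x + t • u - x‖ = t * ‖u‖ := by
          rw [add_sub_cancel_left, norm_smul, Real.norm_eq_abs, abs_of_pos ht]
        rw [this]; linarith
      have hc2 : ContinuousAt f (x + t • u) := hf.continuousAt (hΩ.mem_nhds hxtu)
      have ht1 : Filter.Tendsto (fun j => yseq j + t • u) Filter.atTop (nhds (x + t • u)) :=
        htendd.add tendsto_const_nhds
      have htt : Filter.Tendsto (fun j => |f (yseq j + t • u) - f (yseq j)|) Filter.atTop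
          (nhds (|f (x + t • u) - f x|)) :=
        ((hc2.tendsto.comp ht1).sub (hc1.tendsto.comp htendd)).abs
      exact le_of_tendsto htt (Filter.Eventually.of_forall hest)
    -- use the claim to bound the operator norm
    suffices hns : ‖fderiv ℝ f x‖ ≤ C by
      have h5 : ENNReal.ofReal ‖fderiv ℝ f x‖ ≤ ENNReal.ofReal C := ENNReal.ofReal_le_ofReal hns
      rwa [ofReal_norm, hCdef, ENNReal.ofReal_toReal hMlt.ne] at h5
    refine (fderiv ℝ f x).opNorm_le_bound hC0 (fun u => ?_)
    rcases eq_or_ne u 0 with rfl | hu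
    · simp
    have hnu : 0 < ‖u‖ := norm_pos_iff.2 hu
    have haff : HasDerivAt (fun s : ℝ => x + s • u) u 0 := by
      simpa using ((hasDerivAt_id (0:ℝ)).smul_const u).const_add x
    have hdx' : HasFDerivAt f (fderiv ℝ f x) (x + (0:ℝ) • u) := by
      simpa using hdx.hasFDerivAt
    have hline : HasDerivAt (fun s : ℝ => f (x + s • u)) ((fderiv ℝ f x) u) 0 :=
      hdx'.comp_hasDerivAt 0 haff
    have hsl := hasDerivAt_iff_tendsto_slope.1 hline
    have habs : Filter.Tendsto (fun s => |slope (fun s : ℝ => f (x + s • u)) 0 s|)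
        (nhdsWithin (0:ℝ) {(0:ℝ)}ᶜ) (nhds (|(fderiv ℝ f x) u|)) := hsl.abs
    rw [show ‖(fderiv ℝ f x) u‖ = |(fderiv ℝ f x) u| from Real.norm_eq_abs _]
    refine le_of_tendsto habs ?_
    set δ : ℝ := (ε / 2) / ‖u‖ with hδ
    have hδ0 : 0 < δ := by positivity
    have hIoo : Set.Ioo (-δ) δ ∈ nhds (0:ℝ) := Ioo_mem_nhds (by linarith) hδ0
    filter_upwards [mem_nhdsWithin_of_mem_nhds hIoo, self_mem_nhdsWithin] with s hsI hsne
    have hs0 : s ≠ 0 := hsne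
    have hbound : |f (x + s • u) - f x| ≤ C * (|s| * ‖u‖) := by
      rcases lt_or_gt_of_ne hs0 with hneg | hpos
      · have hsd : (-s) * ‖-u‖ < ε / 2 := by
          rw [norm_neg]
          have h6 : -s < δ := by
            have := hsI.1
            linarith
          calc (-s) * ‖u‖ < δ * ‖u‖ := by
                exact mul_lt_mul_of_pos_right h6 hnu
            _ = ε / 2 := by
                rw [hδ]; field_simp
        have h7 := claim (-u) (neg_ne_zero.2 hu) (-s) (by linarith) hsd
        have h8 : x + (-s) • (-u) = x + s • u := by
          rw [smul_neg, neg_smul, neg_neg]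
        rw [h8, norm_neg] at h7
        calc |f (x + s • u) - f x| ≤ C * ((-s) * ‖u‖) := h7
          _ = C * (|s| * ‖u‖) := by rw [abs_of_neg hneg]
      · have hsd : s * ‖u‖ < ε / 2 := by
          have h6 : s < δ := hsI.2
          calc s * ‖u‖ < δ * ‖u‖ := mul_lt_mul_of_pos_right h6 hnu
            _ = ε / 2 := by rw [hδ]; field_simp
        have h7 := claim u hu s hpos hsd
        calc |f (x + s • u) - f x| ≤ C * (s * ‖u‖) := h7
          _ = C * (|s| * ‖u‖) := by rw [abs_of_pos hpos]
    have hg0 : f (x + (0:ℝ) • u) = f x := by simp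
    have hslope : |slope (fun s : ℝ => f (x + s • u)) 0 s| = |f (x + s • u) - f x| / |s| := by
      rw [slope_def_field]
      simp only [sub_zero, hg0]
      rw [abs_div]
    rw [hslope, div_le_iff₀ (abs_pos.2 hs0)]
    calc |f (x + s • u) - f x| ≤ C * (|s| * ‖u‖) := hbound
      _ = C * ‖u‖ * |s| := by ring
  -- conclude
  refine essSup_le_of_ae_le _ ?_
  filter_upwards [ae_restrict_mem hΩm] with x hx
  exact key x hx
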